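/- The sequence (1, 10, 14, 20, 14, 10, 1) is symmetric and unimodal, but its first difference (1, 9, 4, 6) violates Macaulay's growth condition from degree 2 to degree 3; that is, 6 > 4^{<2>}. -/

import Mathlib

/-- `ns = [n_i, n_{i-1}, …, n_j]` is the list of "tops" of the `i`-binomial
(Macaulay) expansion of `n`:  the tops are strictly decreasing, the bottoms are
`i, i-1, …, j` with `j = i - ns.length + 1 ≥ 1`, the last top `n_j` satisfies
`n_j ≥ j`, and `n = C(n_i,i) + C(n_{i-1},i-1) + ⋯ + C(n_j,j)`. -/
def IsBinomialExpansion (n i : ℕ) (ns : List ℕ) : Prop :=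
  ns ≠ [] ∧ ns.length ≤ i ∧ ns.Chain' (· > ·) ∧
  i + 1 ≤ ns.getLast! + ns.length ∧
  n = ∑ k ∈ Finset.range ns.length, (ns.getD k 0).choose (i - k)

/-- `MacaulayNext n i m` says `m = n^{<i>}`, computed from the `i`-binomial
expansion of `n` by `n^{<i>} = C(n_i+1,i+1) + ⋯ + C(n_j+1,j+1)`. -/
def MacaulayNext (n i m : ℕ) : Prop :=
  ∃ ns, IsBinomialExpansion n i ns ∧
    m = ∑ k ∈ Finset.range ns.length, (ns.getD k 0 + 1).choose (i - k + 1)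

/-- `MacaulayLE a i b` says `b ≤ a^{<i>}`, with the convention `0^{<i>} = 0`. -/
def MacaulayLE (a i b : ℕ) : Prop :=
  if a = 0 then b = 0 else ∃ m, MacaulayNext a i m ∧ b ≤ m

/-- `(c 0, c 1, …, c e)` is an O-sequence (satisfies Macaulay's condition). -/
def IsOSequence (c : ℕ → ℕ) (e : ℕ) : Prop :=
  c 0 = 1 ∧ ∀ i, 1 ≤ i → i + 1 ≤ e → MacaulayLE (c i) i (c (i + 1))

/-- `(H 0, …, H e)` is symmetric. -/
def IsSymmetric (H : ℕ → ℕ) (e : ℕ) : Prop :=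
  ∀ i ≤ e, H i = H (e - i)

/-- `(H 0, …, H e)` is unimodal. -/
def IsUnimodal (H : ℕ → ℕ) (e : ℕ) : Prop :=
  ∃ m, m ≤ e ∧ (∀ i, i < m → H i ≤ H (i + 1)) ∧
    ∀ i, m ≤ i → i < e → H (i + 1) ≤ H i

/-- The first difference of `H` (with `H_{-1} = 0`). -/
def FirstDiff (H : ℕ → ℕ) : ℕ → ℕ :=
  fun i => if i = 0 then H 0 else H i - H (i - 1)

/-- `(H 0, …, H e)` is an SI-sequence: it is symmetric and the first
difference of its first half `(H 0, …, H ⌊e/2⌋)` is an O-sequence. -/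
def IsSISequence (H : ℕ → ℕ) (e : ℕ) : Prop :=
  IsSymmetric H e ∧ IsOSequence (FirstDiff H) (e / 2)

/-- The sequence `(1,10,14,20,14,10,1)` is symmetric and unimodal, but its
first difference `(1,9,4,6)` violates Macaulay's growth condition from degree
2 to degree 3, since `6 > 4^{<2>} (= 5)`. -/

lemma macaulay_4_2 {m : ℕ} (h : MacaulayNext 4 2 m) : m = 5 := by
  obtain ⟨ns, ⟨hne, hlen, hchain, hlast, hsum⟩, hm⟩ := h
  match ns, hne with
  | [a], _ =>
    simp [Finset.sum_range_succ, List.getLast!] at hsum hm hlast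
    have ha : a ≤ 4 := by
      by_contra hc
      have : Nat.choose 5 2 ≤ a.choose 2 := Nat.choose_le_choose 2 (by omega)
      simp [Nat.choose] at this; omega
    interval_cases a <;> simp_all [Nat.choose]
  | [a, b], _ =>
    simp [Finset.sum_range_succ, List.getLast!, List.Chain', List.isChain_cons_cons] at hsum hm hlast hchain
    have ha : a ≤ 4 := by
      by_contra hc
      have : Nat.choose 5 2 ≤ a.choose 2 := Nat.choose_le_choose 2 (by omega)
      simp [Nat.choose] at this; omega
    interval_cases a <;> simp_all [Nat.choose] <;> first | omega | (interval_cases b <;> simp_all [Nat.choose])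
  | a :: b :: c :: tl, _ => simp at hlen

theorem example_1_10_14_20 :
    letI H : ℕ → ℕ := fun i => [1, 10, 14, 20, 14, 10, 1].getD i 0
    IsSymmetric H 6 ∧ IsUnimodal H 6 ∧
      FirstDiff H 0 = 1 ∧ FirstDiff H 1 = 9 ∧ FirstDiff H 2 = 4 ∧
      FirstDiff H 3 = 6 ∧
      (∀ m, MacaulayNext 4 2 m → 6 > m) ∧ ¬ MacaulayLE 4 2 6 := by
  refine ⟨?_, ⟨3, by norm_num, ?_, ?_⟩, rfl, rfl, rfl, rfl, ?_, ?_⟩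
  · intro i hi; interval_cases i <;> rfl
  · intro i hi; interval_cases i <;> decide
  · intro i hi1 hi2; interval_cases i <;> decide
  · intro m hm; have := macaulay_4_2 hm; omega
  · intro hle
    rw [MacaulayLE] at hle
    simp at hle
    obtain ⟨m, hm, h6⟩ := hle
    have := macaulay_4_2 hm; omega
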